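/- There exist finite types A and C, a function f : A^ω → 𝒫(C^ω) that is prefix-continuous, prefix-closed, and prefix-compact, and a recurrence property L ⊆ C^ω, such that the existential preimage f_E^{-1}(L) is not a Borel subset of A^ω, i.e., it is not measurable with respect to the Borel σ-algebra generated by the product topology on A^ω = ℕ → A (A discrete). -/

import Mathlib

/-- The prefix of length `n` of the infinite word `π`, i.e. the list `[π 0, …, π (n-1)]`. -/
def wordPrefix {A : Type*} (π : ℕ → A) (n : ℕ) : List A := (List.range n).map π

/-- The set of prefixes of length `n` of words in `L`. -/
def prefN {A : Type*} (L : Set (ℕ → A)) (n : ℕ) : Set (List A) :=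
  (fun π => wordPrefix π n) '' L

/-- The set of all prefixes of words in `L`. -/
def prefAll {A : Type*} (L : Set (ℕ → A)) : Set (List A) := ⋃ n, prefN L n

/-- The set of all prefixes of the single word `π`. -/
def prefWord {A : Type*} (π : ℕ → A) : Set (List A) := {w | ∃ n, w = wordPrefix π n}

/-- `f` is prefix-continuous. -/
def PrefixContinuous {A B : Type*} (f : (ℕ → A) → Set (ℕ → B)) : Prop :=
  ∀ (n : ℕ) (π : ℕ → A), ∃ m : ℕ, ∀ π' : ℕ → A,
    wordPrefix π' m = wordPrefix π m → prefN (f π) n = prefN (f π') n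

/-- `f` is prefix-closed. -/
def PrefixClosed {A B : Type*} (f : (ℕ → A) → Set (ℕ → B)) : Prop :=
  ∀ (π : ℕ → A) (σ : ℕ → B), prefWord σ ⊆ prefAll (f π) → σ ∈ f π

/-- `f` is prefix-compact. -/
def PrefixCompact {A B : Type*} (f : (ℕ → A) → Set (ℕ → B)) : Prop :=
  ∀ (n : ℕ) (π : ℕ → A), (prefN (f π) n).Finite

/-- The universal preimage of `S` under `f`. -/
def univPreimage {A B : Type*} (f : (ℕ → A) → Set (ℕ → B)) (S : Set (ℕ → B)) :
    Set (ℕ → A) := {π | f π ⊆ S}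

/-- The existential preimage of `S` under `f`. -/
def existPreimage {A B : Type*} (f : (ℕ → A) → Set (ℕ → B)) (S : Set (ℕ → B)) :
    Set (ℕ → A) := {π | (f π ∩ S).Nonempty}

/-- `L` is a safety property. -/
def IsSafetyProperty {B : Type*} (L : Set (ℕ → B)) : Prop :=
  ∃ Φ : Set (List B), L = {π | ∀ n : ℕ, wordPrefix π n ∈ Φ}

/-- `L` is a guarantee property. -/
def IsGuaranteeProperty {B : Type*} (L : Set (ℕ → B)) : Prop :=
  ∃ Φ : Set (List B), L = {π | ∃ n : ℕ, wordPrefix π n ∈ Φ}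

/-- `L` is a recurrence property. -/
def IsRecurrenceProperty {B : Type*} (L : Set (ℕ → B)) : Prop :=
  ∃ Φ : Set (List B), L = {π | {n : ℕ | wordPrefix π n ∈ Φ}.Infinite}

/-- `L` is a persistence property. -/
def IsPersistenceProperty {B : Type*} (L : Set (ℕ → B)) : Prop :=
  ∃ Φ : Set (List B), L = {π | {n : ℕ | wordPrefix π n ∈ Φ}.Finite}

namespace NotBorelAux

open MeasureTheory Set Filter

lemma wordPrefix_length {A : Type*} (σ : ℕ → A) (n : ℕ) : (wordPrefix σ n).length = n := by
  simp [wordPrefix]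

lemma wordPrefix_zero {A : Type*} (σ : ℕ → A) : wordPrefix σ 0 = [] := rfl

lemma wordPrefix_add {A : Type*} (σ : ℕ → A) (i j : ℕ) :
    wordPrefix σ (i + j) = wordPrefix σ i ++ wordPrefix (fun n => σ (i + n)) j := by
  simp [wordPrefix, List.range_add, Function.comp]

lemma wordPrefix_succ {A : Type*} (σ : ℕ → A) (n : ℕ) :
    wordPrefix σ (n + 1) = wordPrefix σ n ++ [σ n] := by
  rw [wordPrefix_add]; simp [wordPrefix]

lemma wordPrefix_getElem {A : Type*} (σ : ℕ → A) (n k : ℕ) (hk : k < (wordPrefix σ n).length) :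
    (wordPrefix σ n)[k] = σ k := by
  simp [wordPrefix]

lemma wordPrefix_getD {A : Type*} (l : List A) (d : A) :
    wordPrefix (fun i => l.getD i d) l.length = l := by
  apply List.ext_getElem (by simp [wordPrefix_length])
  intro i h1 h2
  rw [wordPrefix_getElem, List.getD_eq_getElem _ _ h2]

lemma wordPrefix_take {A : Type*} (σ : ℕ → A) (n k : ℕ) :
    (wordPrefix σ n).take k = wordPrefix σ (min k n) := by
  simp [wordPrefix, ← List.map_take, List.take_range]

lemma wordPrefix_eq_iff {A : Type*} (σ τ : ℕ → A) (n : ℕ) :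
    wordPrefix σ n = wordPrefix τ n ↔ ∀ k < n, σ k = τ k := by
  constructor
  · intro h k hk
    have h1 : (wordPrefix σ n)[k]'(by simp [wordPrefix_length, hk]) =
        (wordPrefix τ n)[k]'(by simp [wordPrefix_length, hk]) := by
      simp only [h]
    rwa [wordPrefix_getElem, wordPrefix_getElem] at h1
  · intro h
    apply List.ext_getElem (by simp [wordPrefix_length])
    intro i h1 h2
    rw [wordPrefix_getElem, wordPrefix_getElem]
    exact h i (by simpa [wordPrefix_length] using h1)

def ulen (v : List ℕ) : ℕ := v.sum + v.length

def unary : List ℕ → List Bool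
  | [] => []
  | a :: v => List.replicate a false ++ true :: unary v

lemma ulen_nil : ulen [] = 0 := rfl

lemma ulen_cons (a : ℕ) (v : List ℕ) : ulen (a :: v) = (a + 1) + ulen v := by
  simp [ulen]; omega

lemma ulen_snoc (v : List ℕ) (a : ℕ) : ulen (v ++ [a]) = ulen v + (a + 1) := by
  simp [ulen]; omega

lemma unary_length (v : List ℕ) : (unary v).length = ulen v := by
  induction v with
  | nil => rfl
  | cons a v ih => simp [unary, ih, ulen_cons]; omega

lemma unary_snoc (v : List ℕ) (a : ℕ) :
    unary (v ++ [a]) = unary v ++ (List.replicate a false ++ [true]) := by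
  induction v with
  | nil => simp [unary]
  | cons b v ih => simp [unary, ih]

lemma unary_count (v : List ℕ) : (unary v).count true = v.length := by
  induction v with
  | nil => rfl
  | cons a v ih => simp [unary, ih, List.count_replicate]

lemma unary_eq_snoc_true (v : List ℕ) (hv : v ≠ []) : ∃ l, unary v = l ++ [true] := by
  induction v with
  | nil => exact absurd rfl hv
  | cons a v ih =>
    rcases eq_or_ne v [] with rfl | hne
    · exact ⟨List.replicate a false, by simp [unary]⟩
    · obtain ⟨l, hl⟩ := ih hne
      exact ⟨List.replicate a false ++ true :: l, by simp [unary, hl]⟩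

/-- `σ` starts with the unary coding of `v`. -/
def Q (v : List ℕ) (σ : ℕ → Bool) : Prop := wordPrefix σ (ulen v) = unary v

lemma Q_nil (σ : ℕ → Bool) : Q [] σ := rfl

lemma wordPrefix_eq_replicate_false {σ : ℕ → Bool} {a : ℕ} :
    wordPrefix σ a = List.replicate a false ↔ ∀ k < a, σ k = false := by
  rw [List.eq_replicate_iff]
  simp [wordPrefix_length, wordPrefix]

lemma Q_cons {a : ℕ} {v : List ℕ} {σ : ℕ → Bool} :
    Q (a :: v) σ ↔ (∀ k < a, σ k = false) ∧ σ a = true ∧ Q v (fun n => σ (a + 1 + n)) := by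
  unfold Q
  rw [ulen_cons, wordPrefix_add σ (a + 1) (ulen v)]
  have h1 : wordPrefix σ (a + 1) = wordPrefix σ a ++ [σ a] := wordPrefix_succ σ a
  have h2 : unary (a :: v) = (List.replicate a false ++ [true]) ++ unary v := by
    simp [unary]
  rw [h1, h2]
  constructor
  · intro h
    obtain ⟨h3, h4⟩ := List.append_inj h
      (by simp [wordPrefix_length])
    obtain ⟨h5, h6⟩ := List.append_inj h3 (by simp [wordPrefix_length])
    exact ⟨wordPrefix_eq_replicate_false.mp h5, by simpa using h6, h4⟩
  · rintro ⟨h3, h4, h5⟩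
    rw [wordPrefix_eq_replicate_false.mpr h3, h4, h5]

lemma Q_snoc {a : ℕ} {v : List ℕ} {σ : ℕ → Bool} :
    Q (v ++ [a]) σ ↔ Q v σ ∧ (∀ k < a, σ (ulen v + k) = false) ∧ σ (ulen v + a) = true := by
  unfold Q
  rw [ulen_snoc, wordPrefix_add σ (ulen v) (a + 1), unary_snoc,
    wordPrefix_succ (fun n => σ (ulen v + n)) a]
  constructor
  · intro h
    obtain ⟨h3, h4⟩ := List.append_inj h (by simp [wordPrefix_length, unary_length])
    obtain ⟨h5, h6⟩ := List.append_inj h4 (by simp [wordPrefix_length])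
    exact ⟨h3, wordPrefix_eq_replicate_false.mp h5, by simpa using h6⟩
  · rintro ⟨h3, h4, h5⟩
    rw [h3, wordPrefix_eq_replicate_false.mpr h4, h5]

lemma Q_unique : ∀ (v v' : List ℕ) (σ : ℕ → Bool),
    v.length = v'.length → Q v σ → Q v' σ → v = v' := by
  intro v
  induction v with
  | nil =>
    intro v' σ h _ _
    cases v' with
    | nil => rfl
    | cons b v₂ => simp at h
  | cons a v ih =>
    intro v' σ hlen h1 h2
    cases v' with
    | nil => simp at hlen
    | cons b v₂ =>
      rw [Q_cons] at h1 h2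
      have hab : a = b := by
        rcases lt_trichotomy a b with h | h | h
        · have := h2.1 a h
          rw [h1.2.1] at this; simp at this
        · exact h
        · have := h1.1 b h
          rw [h2.2.1] at this; simp at this
      subst hab
      have := ih v₂ (fun n => σ (a + 1 + n)) (by simpa using hlen) h1.2.2 h2.2.2
      rw [this]

lemma Q_build (y : ℕ → ℕ) (σ : ℕ → Bool)
    (hf : ∀ n, ∀ k < y n, σ (ulen (wordPrefix y n) + k) = false)
    (ht : ∀ n, σ (ulen (wordPrefix y n) + y n) = true) :
    ∀ n, Q (wordPrefix y n) σ := by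
  intro n
  induction n with
  | zero => exact Q_nil σ
  | succ n ih =>
    rw [wordPrefix_succ, Q_snoc]
    exact ⟨ih, hf n, ht n⟩

lemma unary_injective : Function.Injective unary := by
  intro v v' h
  have hulen : ulen v = ulen v' := by rw [← unary_length, ← unary_length, h]
  have hlen : v.length = v'.length := by
    rw [← unary_count, ← unary_count, h]
  set σ : ℕ → Bool := fun i => (unary v).getD i false with hσ
  have q1 : Q v σ := by
    unfold Q
    rw [← unary_length v]
    exact wordPrefix_getD (unary v) false
  have q2 : Q v' σ := by
    unfold Q
    rw [← hulen, ← h]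
    exact q1
  exact Q_unique v v' σ hlen q1 q2
/-- position bookkeeping: `sfun y n = ulen (y↾n)`. -/
def sfun (y : ℕ → ℕ) (n : ℕ) : ℕ := ulen (wordPrefix y n)

lemma sfun_zero (y : ℕ → ℕ) : sfun y 0 = 0 := rfl

lemma sfun_succ (y : ℕ → ℕ) (n : ℕ) : sfun y (n + 1) = sfun y n + (y n + 1) := by
  unfold sfun
  rw [wordPrefix_succ, ulen_snoc]

lemma sfun_strictMono (y : ℕ → ℕ) : StrictMono (sfun y) :=
  strictMono_nat_of_lt_succ (fun n => by rw [sfun_succ]; omega)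

lemma sfun_le_apply (y : ℕ → ℕ) (n : ℕ) : n ≤ sfun y n := by
  induction n with
  | zero => simp
  | succ n ih => rw [sfun_succ]; omega

/-- The infinite unary coding of `y : ℕ → ℕ` as an infinite bit string
`0^(y 0) 1 0^(y 1) 1 ⋯`. -/
noncomputable def encFun (y : ℕ → ℕ) (n : ℕ) : Bool :=
  @decide (∃ i, n + 1 = sfun y (i + 1)) (Classical.propDecidable _)

lemma encFun_true_iff (y : ℕ → ℕ) (n : ℕ) :
    encFun y n = true ↔ ∃ i, n + 1 = sfun y (i + 1) := by
  simp only [encFun, decide_eq_true_eq]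

lemma encFun_false_iff (y : ℕ → ℕ) (n : ℕ) :
    encFun y n = false ↔ ¬ ∃ i, n + 1 = sfun y (i + 1) := by
  rw [Bool.eq_false_iff, ne_eq, encFun_true_iff]

lemma Q_encFun (y : ℕ → ℕ) : ∀ n, Q (wordPrefix y n) (encFun y) := by
  apply Q_build
  · intro n k hk
    rw [encFun_false_iff]
    rintro ⟨i, hi⟩
    replace hi : sfun y n + k + 1 = sfun y (i + 1) := hi
    have h2 : sfun y (n + 1) = sfun y n + (y n + 1) := sfun_succ y n
    have h1 : sfun y n < sfun y (i + 1) := by omega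
    have h3 : sfun y (i + 1) < sfun y (n + 1) := by omega
    have := (sfun_strictMono y).lt_iff_lt.mp h1
    have := (sfun_strictMono y).lt_iff_lt.mp h3
    omega
  · intro n
    rw [encFun_true_iff]
    refine ⟨n, ?_⟩
    show sfun y n + y n + 1 = sfun y (n + 1)
    rw [sfun_succ]
    omega

lemma encFun_infinite (y : ℕ → ℕ) : {m | encFun y m = true}.Infinite := by
  refine Set.infinite_of_injective_forall_mem
    (f := fun n => sfun y n + y n) ?_ ?_
  · have hs : StrictMono (fun n => sfun y n + y n) := by
      apply strictMono_nat_of_lt_succ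
      intro n
      have := sfun_succ y n
      show sfun y n + y n < sfun y (n + 1) + y (n + 1)
      omega
    exact hs.injective
  · intro n
    show encFun y (sfun y n + y n) = true
    rw [encFun_true_iff]
    exact ⟨n, by rw [sfun_succ]; omega⟩

open Nat in
lemma decode (σ : ℕ → Bool) (hσ : {m | σ m = true}.Infinite) :
    ∃ y : ℕ → ℕ, ∀ n, Q (wordPrefix y n) σ := by
  classical
  set p : ℕ → ℕ := Nat.nth (fun m => σ m = true) with hp
  have hinf : {m | σ m = true}.Infinite := hσ
  have hmono : StrictMono p := Nat.nth_strictMono hinf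
  have hmem : ∀ n, σ (p n) = true := fun n => Nat.nth_mem_of_infinite hinf n
  have hgap : ∀ j, σ j = true → ∃ i, p i = j := by
    intro j hj
    exact ⟨Nat.count (fun m => σ m = true) j, Nat.nth_count hj⟩
  set y : ℕ → ℕ := fun n => match n with
    | 0 => p 0
    | n + 1 => p (n + 1) - p n - 1 with hy
  have hps : ∀ n, sfun y (n + 1) = p n + 1 := by
    intro n
    induction n with
    | zero =>
      rw [sfun_succ, sfun_zero]
      show 0 + (p 0 + 1) = p 0 + 1
      omega
    | succ n ih =>
      rw [sfun_succ, ih]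
      have : p n < p (n + 1) := hmono (Nat.lt_succ_self n)
      show p n + 1 + (p (n+1) - p n - 1 + 1) = p (n+1) + 1
      omega
  refine ⟨y, Q_build y σ ?_ ?_⟩
  · intro n k hk
    by_contra hc
    simp only [Bool.not_eq_false] at hc
    obtain ⟨i, hi⟩ := hgap _ hc
    match n with
    | 0 =>
      have hk' : k < p 0 := hk
      replace hi : p i = 0 + k := hi
      have : p 0 ≤ p i := hmono.monotone (Nat.zero_le i)
      omega
    | n + 1 =>
      have h1 : ulen (wordPrefix y (n + 1)) = p n + 1 := hps n
      rw [h1] at hi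
      have hk' : k < p (n + 1) - p n - 1 := hk
      have hlt : p n < p (n + 1) := hmono (Nat.lt_succ_self n)
      have hgt : p n < p i := by omega
      have hlt2 : p i < p (n + 1) := by omega
      have := hmono.lt_iff_lt.mp hgt
      have := hmono.lt_iff_lt.mp hlt2
      omega
  · intro n
    match n with
    | 0 =>
      show σ (0 + p 0) = true
      rw [Nat.zero_add]
      exact hmem 0
    | n + 1 =>
      have h1 : ulen (wordPrefix y (n + 1)) = p n + 1 := hps n
      rw [h1]
      have hlt : p n < p (n + 1) := hmono (Nat.lt_succ_self n)
      have : p n + 1 + y (n + 1) = p (n + 1) := by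
        show p n + 1 + (p (n + 1) - p n - 1) = p (n + 1)
        omega
      rw [this]
      exact hmem (n + 1)
/-- Injective coding of pairs of finite words into `ℕ`. -/
def code (p : List Bool) (v : List ℕ) : ℕ := Encodable.encode (p, v)

lemma code_inj {p p' : List Bool} {v v' : List ℕ} (h : code p v = code p' v') :
    p = p' ∧ v = v' := by
  have := Encodable.encode_injective h
  exact Prod.mk.injEq .. ▸ this

/-- The strategy-like function: `σ ∈ F x` iff every complete unary block prefix `v` of `σ`
satisfies the constraint given by `x` at the code of `(x↾|v|, v)`. -/
def F (x : ℕ → Bool) : Set (ℕ → Bool) :=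
  {σ | ∀ v : List ℕ, Q v σ → x (code (wordPrefix x v.length) v) = false}

def Phi : Set (List Bool) := {w | ∃ l, w = l ++ [true]}

def Lrec : Set (ℕ → Bool) := {σ | {n : ℕ | wordPrefix σ n ∈ Phi}.Infinite}

lemma mem_Phi_iff {σ : ℕ → Bool} {n : ℕ} :
    wordPrefix σ n ∈ Phi ↔ ∃ m, σ m = true ∧ n = m + 1 := by
  constructor
  · rintro ⟨l, hl⟩
    have hn : n = l.length + 1 := by
      have := congrArg List.length hl
      simpa [wordPrefix_length] using this
    subst hn
    rw [wordPrefix_succ] at hl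
    obtain ⟨-, h2⟩ := List.append_inj hl (by simp [wordPrefix_length])
    exact ⟨l.length, by simpa using h2.symm, rfl⟩
  · rintro ⟨m, hm, rfl⟩
    exact ⟨wordPrefix σ m, by rw [wordPrefix_succ, hm]⟩

lemma mem_Lrec_iff {σ : ℕ → Bool} : σ ∈ Lrec ↔ {m | σ m = true}.Infinite := by
  have hset : {n : ℕ | wordPrefix σ n ∈ Phi} = (fun m => m + 1) '' {m | σ m = true} := by
    ext n
    simp only [Set.mem_setOf_eq, Set.mem_image, mem_Phi_iff]
    constructor
    · rintro ⟨m, hm, rfl⟩; exact ⟨m, hm, rfl⟩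
    · rintro ⟨m, hm, rfl⟩; exact ⟨m, hm, rfl⟩
  show {n : ℕ | wordPrefix σ n ∈ Phi}.Infinite ↔ _
  rw [hset, Set.infinite_image_iff (Function.Injective.injOn (add_left_injective 1))]

/-- The diagonal analytic set. -/
def Sdiag : Set (ℕ → Bool) :=
  {x | ∃ y : ℕ → ℕ, ∀ n : ℕ, x (code (wordPrefix x n) (wordPrefix y n)) = false}

lemma exist_eq : existPreimage F Lrec = Sdiag := by
  ext x
  constructor
  · rintro ⟨σ, hF, hL⟩
    obtain ⟨y, hy⟩ := decode σ (mem_Lrec_iff.mp hL)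
    refine ⟨y, fun n => ?_⟩
    have := hF (wordPrefix y n) (hy n)
    rwa [wordPrefix_length] at this
  · rintro ⟨y, hy⟩
    refine ⟨encFun y, fun v hv => ?_, mem_Lrec_iff.mpr (encFun_infinite y)⟩
    have h2 : Q (wordPrefix y v.length) (encFun y) := Q_encFun y v.length
    have hveq : v = wordPrefix y v.length :=
      Q_unique v (wordPrefix y v.length) (encFun y) (by rw [wordPrefix_length]) hv h2
    rw [hveq, wordPrefix_length]
    exact hy v.length

lemma prefixCompact_F : PrefixCompact F := by
  intro n x
  apply Set.Finite.subset (List.finite_length_eq Bool n)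
  rintro w ⟨σ, -, rfl⟩
  exact wordPrefix_length σ n

lemma prefixClosed_F : PrefixClosed F := by
  intro x σ h v hv
  have h1 : wordPrefix σ (ulen v) ∈ prefWord σ := ⟨ulen v, rfl⟩
  obtain ⟨n, τ, hτ, hw⟩ := Set.mem_iUnion.mp (h h1)
  have hn : n = ulen v := by
    have := congrArg List.length hw
    simpa [wordPrefix_length] using this
  subst hn
  exact hτ v (hw.trans hv)

lemma prefN_F (x : ℕ → Bool) (n : ℕ) :
    prefN (F x) n = {w : List Bool | w.length = n ∧
      ∀ v : List ℕ, unary v <+: w → x (code (wordPrefix x v.length) v) = false} := by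
  ext w
  constructor
  · rintro ⟨σ, hσ, rfl⟩
    refine ⟨wordPrefix_length σ n, fun v hv => hσ v ?_⟩
    have hle : ulen v ≤ n := by
      have := hv.length_le
      rwa [unary_length, wordPrefix_length] at this
    have : unary v = (wordPrefix σ n).take (ulen v) := by
      rw [← unary_length v]
      exact List.prefix_iff_eq_take.mp hv
    rw [wordPrefix_take, min_eq_left hle] at this
    exact this.symm
  · rintro ⟨hlen, hw⟩
    refine ⟨fun i => w.getD i false, fun v hv => ?_, by rw [← hlen]; exact wordPrefix_getD w false⟩
    set σ : ℕ → Bool := fun i => w.getD i false with hσdef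
    have hwp : wordPrefix σ n = w := by rw [← hlen]; exact wordPrefix_getD w false
    have hle : ulen v ≤ n := by
      by_contra hc
      push_neg at hc
      have hvne : v ≠ [] := by
        rintro rfl
        simp [ulen_nil] at hc
      obtain ⟨l, hl⟩ := unary_eq_snoc_true v hvne
      have hsucc : ulen v = (ulen v - 1) + 1 := by omega
      have hv' := hv
      unfold Q at hv'
      rw [hsucc, wordPrefix_succ, hl] at hv'
      obtain ⟨-, h2⟩ := List.append_inj hv' (by
        have := congrArg List.length hl
        simp [unary_length] at this
        simp [wordPrefix_length]
        omega)
      have hfalse : σ (ulen v - 1) = false := by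
        apply List.getD_eq_default
        omega
      rw [hfalse] at h2
      simp at h2
    apply hw
    have : unary v = w.take (ulen v) := by
      rw [← hwp, wordPrefix_take, min_eq_left hle]
      exact hv.symm
    rw [this]
    exact List.take_prefix _ w

lemma prefixContinuous_F : PrefixContinuous F := by
  intro n x
  have hVfin : {v : List ℕ | ulen v ≤ n}.Finite := by
    apply Set.Finite.of_finite_image (f := unary) _ unary_injective.injOn
    apply Set.Finite.subset (List.finite_length_le Bool n)
    rintro l ⟨v, hv, rfl⟩
    simpa [unary_length] using hv
  have hCfin : ((fun v : List ℕ => code (wordPrefix x v.length) v) '' {v | ulen v ≤ n}).Finite :=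
    hVfin.image _
  obtain ⟨B, hB⟩ := hCfin.bddAbove
  refine ⟨max n (B + 1), fun x' hx' => ?_⟩
  have hagree : ∀ k < max n (B + 1), x' k = x k :=
    (wordPrefix_eq_iff x' x _).mp hx'
  have hkey : ∀ v : List ℕ, ulen v ≤ n →
      x (code (wordPrefix x v.length) v) = x' (code (wordPrefix x' v.length) v) := by
    intro v hv
    have hlv : v.length ≤ n := by
      have : v.length ≤ ulen v := by unfold ulen; omega
      omega
    have hpre : wordPrefix x' v.length = wordPrefix x v.length := by
      rw [wordPrefix_eq_iff]
      intro k hk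
      exact hagree k (by omega)
    have hcode : code (wordPrefix x v.length) v ≤ B :=
      hB ⟨v, hv, rfl⟩
    rw [hpre]
    exact (hagree _ (by omega)).symm
  rw [prefN_F, prefN_F]
  ext w
  simp only [Set.mem_setOf_eq]
  refine and_congr_right fun hlen => ?_
  refine forall_congr' fun v => imp_congr_right fun hv => ?_
  have hle : ulen v ≤ n := by
    have := hv.length_le
    rw [unary_length, hlen] at this
    exact this
  rw [hkey v hle]
open MeasureTheory Filter in
lemma universal (A : Set (ℕ → Bool)) (hA : AnalyticSet A) :
    ∃ x₀ : ℕ → Bool, ∀ z, z ∈ A ↔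
      ∃ y : ℕ → ℕ, ∀ n, x₀ (code (wordPrefix z n) (wordPrefix y n)) = false := by
  classical
  rw [AnalyticSet] at hA
  rcases hA with rfl | ⟨g, gc, rfl⟩
  · refine ⟨fun _ => true, fun z => ?_⟩
    simp only [Set.mem_empty_iff_false, false_iff]
    rintro ⟨y, hy⟩
    simpa using hy 0
  · set P : ℕ → Prop := fun c => ∃ (p : List Bool) (v : List ℕ), c = code p v ∧
      ∃ y : ℕ → ℕ, wordPrefix y v.length = v ∧ wordPrefix (g y) p.length = p with hP
    refine ⟨fun c => if P c then false else true, fun z => ?_⟩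
    constructor
    · rintro ⟨y, rfl⟩
      refine ⟨y, fun n => ?_⟩
      show (if P (code (wordPrefix (g y) n) (wordPrefix y n)) then false else true) = false
      rw [if_pos]
      exact ⟨wordPrefix (g y) n, wordPrefix y n, rfl, y,
        by rw [wordPrefix_length], by rw [wordPrefix_length]⟩
    · rintro ⟨y', h⟩
      have key : ∀ n, ∃ yn : ℕ → ℕ,
          wordPrefix yn n = wordPrefix y' n ∧ wordPrefix (g yn) n = wordPrefix z n := by
        intro n
        have hn := h n
        have hPc : P (code (wordPrefix z n) (wordPrefix y' n)) := by
          by_contra hc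
          simp only [if_neg hc] at hn
          exact Bool.noConfusion hn
        obtain ⟨p, v, hcode, y, h1, h2⟩ := hPc
        obtain ⟨hp, hv⟩ := code_inj hcode
        subst hp; subst hv
        rw [wordPrefix_length] at h1 h2
        exact ⟨y, h1, h2⟩
      choose Y h1 h2 using key
      have hy : Tendsto Y atTop (nhds y') := by
        rw [tendsto_pi_nhds]
        intro i
        apply tendsto_atTop_of_eventually_const (i₀ := i + 1)
        intro n hn
        exact (wordPrefix_eq_iff (Y n) y' n).mp (h1 n) i (by omega)
      have hz : Tendsto (fun n => g (Y n)) atTop (nhds z) := by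
        rw [tendsto_pi_nhds]
        intro i
        apply tendsto_atTop_of_eventually_const (i₀ := i + 1)
        intro n hn
        exact (wordPrefix_eq_iff (g (Y n)) z n).mp (h2 n) i (by omega)
      have hgy : Tendsto (fun n => g (Y n)) atTop (nhds (g y')) :=
        (gc.tendsto y').comp hy
      exact ⟨y', tendsto_nhds_unique hgy hz⟩

open MeasureTheory in
lemma not_analytic_compl : ¬ AnalyticSet Sdiagᶜ := by
  intro h
  obtain ⟨x₀, hx⟩ := universal _ h
  have h1 := hx x₀
  by_cases hmem : x₀ ∈ Sdiag
  · exact (h1.mpr hmem) hmem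
  · exact hmem (h1.mp hmem)
end NotBorelAux

open NotBorelAux

/-- There are finite alphabets `A`, `C`, a prefix-continuous, prefix-closed,
prefix-compact function `f : A^ω → 𝒫(C^ω)` and a recurrence property `L ⊆ C^ω` whose
existential preimage under `f` is not Borel, i.e., not measurable with respect to the
Borel σ-algebra generated by the product topology on `ℕ → A` (`A` discrete). -/
theorem existPreimage_of_recurrence_not_borel :
    ∃ (A C : Type) (_ : Fintype A) (_ : Fintype C)
      (f : (ℕ → A) → Set (ℕ → C)) (L : Set (ℕ → C)),
      PrefixContinuous f ∧ PrefixClosed f ∧ PrefixCompact f ∧ IsRecurrenceProperty L ∧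
      ¬ @MeasurableSet (ℕ → A)
          (@borel (ℕ → A) (@Pi.topologicalSpace ℕ (fun _ => A) (fun _ => ⊥)))
          (existPreimage f L) := by
  refine ⟨Bool, Bool, inferInstance, inferInstance, F, Lrec,
    prefixContinuous_F, prefixClosed_F, prefixCompact_F, ⟨Phi, rfl⟩, ?_⟩
  intro h
  have heq : @borel (ℕ → Bool) (@Pi.topologicalSpace ℕ (fun _ => Bool) (fun _ => ⊥)) =
      (inferInstance : MeasurableSpace (ℕ → Bool)) := BorelSpace.measurable_eq.symm
  rw [heq, exist_eq] at h
  haveI : PolishSpace (ℕ → Bool) := by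
    haveI : TopologicalSpace.SeparableSpace (ℕ → Bool) := inferInstance
    haveI : TopologicalSpace.IsCompletelyMetrizableSpace (ℕ → Bool) := inferInstance
    infer_instance
  exact not_analytic_compl h.compl.analyticSet
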